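/- Let G(T, x, z) ∈ ℚ[T, x, z] be an irreducible polynomial that is monic in z, with T-degree at most D and z-degree exactly D_z. Let K be a field extension of ℚ and let φ(T, x) ∈ K[T, x] be an approximate root of G of order 2D·D_z + 1, i.e., G(T, x, φ(T, x)) ≡ 0 mod T^{2D·D_z + 1}. Suppose B(T, z) ∈ ℚ(x)[T, z] is monic in z, has T-degree at most D and z-degree exactly D_z, and satisfies B(T, φ(T, x)) ≡ 0 mod T^{2D·D_z + 1} (after substituting z := φ(T, x), viewing all coefficients in K(x)). Then B ≡ G, i.e., B equals G viewed as an element of ℚ(x)[T, z]. -/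

import Mathlib

/-!
Lemma `unique-minimal-polynomial`: a monic-in-`z` polynomial `B(T, z) ∈ ℚ(x)[T, z]`
of `T`-degree at most `D` and `z`-degree exactly `D_z` that annihilates an
approximate root `φ` of the irreducible polynomial `G(T, x, z)` to order
`2·D·D_z + 1` must equal `G`.

`G ∈ ℚ[T, x, z]` is represented as `Polynomial (Polynomial (MvPolynomial (Fin n) ℚ))`,
with `z` the outer variable and `T` the inner one; `B ∈ ℚ(x)[T, z]` as
`Polynomial (Polynomial (FractionRing (MvPolynomial (Fin n) ℚ)))`; and
`φ ∈ K[T, x]` as `Polynomial (MvPolynomial (Fin n) K)` for a field extension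
`K` of `ℚ` (i.e. any field of characteristic zero).  The substitution
`B(T, φ(T, x))` is performed after moving all coefficients into `K(x)`.
-/

noncomputable section

/-- The canonical embedding `ℚ(x) → K(x)` induced by `ℚ ↪ K`. -/
def liftFrac (n : ℕ) (K : Type*) [Field K] [CharZero K] :
    FractionRing (MvPolynomial (Fin n) ℚ) →+* FractionRing (MvPolynomial (Fin n) K) :=
  IsFractionRing.lift
    (g := (algebraMap (MvPolynomial (Fin n) K)
        (FractionRing (MvPolynomial (Fin n) K))).comp
      (MvPolynomial.map (algebraMap ℚ K)))
    (by
      have h1 : Function.Injective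
          (algebraMap (MvPolynomial (Fin n) K) (FractionRing (MvPolynomial (Fin n) K))) :=
        IsFractionRing.injective _ _
      have h2 : Function.Injective
          (MvPolynomial.map (σ := Fin n) (algebraMap ℚ K)) :=
        MvPolynomial.map_injective _ (algebraMap ℚ K).injective
      exact fun a b hab => h2 (h1 hab))



-- map/eval commute
lemma map_eval_comm {A B : Type*} [CommRing A] [CommRing B] (g : A →+* B)
    (p : Polynomial (Polynomial A)) (q : Polynomial A) :
    (p.eval q).map g = (p.map (Polynomial.mapRingHom g)).eval (q.map g) := by
  have h : (p.eval q).map g = (Polynomial.mapRingHom g) (p.eval q) := rfl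
  rw [h, Polynomial.eval, Polynomial.hom_eval₂, Polynomial.eval_map]
  rfl

-- sum-of-monomials coefficient
lemma coeff_sum_monomial {F : Type*} [CommRing F] (f : ℕ → F) (nn k : ℕ) :
    (∑ i ∈ Finset.range nn, Polynomial.C (f i) * Polynomial.X ^ i).coeff k
      = if k < nn then f k else 0 := by
  simp only [Polynomial.C_mul_X_pow_eq_monomial, Polynomial.finset_sum_coeff,
    Polynomial.coeff_monomial]
  rw [Finset.sum_ite_eq' (Finset.range nn) k f]
  simp [Finset.mem_range]

-- denominators, level 1
lemma denom1 {R F : Type*} [CommRing R] [IsDomain R] [Field F] [Algebra R F]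
    [IsFractionRing R F] (p : Polynomial F) :
    ∃ b : R, b ≠ 0 ∧ ∃ q : Polynomial R,
      q.map (algebraMap R F) = Polynomial.C (algebraMap R F b) * p := by
  induction p using Polynomial.induction_on' with
  | add p1 p2 h1 h2 =>
    obtain ⟨b1, hb1, q1, e1⟩ := h1
    obtain ⟨b2, hb2, q2, e2⟩ := h2
    refine ⟨b1 * b2, mul_ne_zero hb1 hb2, Polynomial.C b2 * q1 + Polynomial.C b1 * q2, ?_⟩
    simp only [Polynomial.map_add, Polynomial.map_mul, Polynomial.map_C, e1, e2, map_mul]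
    ring
  | monomial i s =>
    obtain ⟨⟨r, b⟩, hb⟩ := IsLocalization.surj (nonZeroDivisors R) s
    refine ⟨(b : R), nonZeroDivisors.coe_ne_zero b, Polynomial.monomial i r, ?_⟩
    rw [Polynomial.map_monomial, ← hb, Polynomial.C_mul_monomial, mul_comm]

-- denominators, level 2
lemma denom2 {R F : Type*} [CommRing R] [IsDomain R] [Field F] [Algebra R F]
    [IsFractionRing R F] (P : Polynomial (Polynomial F)) :
    ∃ b : R, b ≠ 0 ∧ ∃ Q : Polynomial (Polynomial R),
      Q.map (Polynomial.mapRingHom (algebraMap R F))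
        = Polynomial.C (Polynomial.C (algebraMap R F b)) * P := by
  induction P using Polynomial.induction_on' with
  | add p1 p2 h1 h2 =>
    obtain ⟨b1, hb1, q1, e1⟩ := h1
    obtain ⟨b2, hb2, q2, e2⟩ := h2
    refine ⟨b1 * b2, mul_ne_zero hb1 hb2,
      Polynomial.C (Polynomial.C b2) * q1 + Polynomial.C (Polynomial.C b1) * q2, ?_⟩
    simp only [Polynomial.map_add, Polynomial.map_mul, Polynomial.map_C,
      Polynomial.coe_mapRingHom, Polynomial.map_C, e1, e2, map_mul]
    ring
  | monomial i s =>
    obtain ⟨b, hb, q, e⟩ := denom1 (R := R) s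
    refine ⟨b, hb, Polynomial.monomial i q, ?_⟩
    rw [Polynomial.map_monomial, Polynomial.coe_mapRingHom, e,
      Polynomial.C_mul_monomial, mul_comm]

lemma sylvester_aux {F F₁ : Type*} [Field F] [Field F₁] (ℓ : F →+* F₁)
    (φ₁ : Polynomial F₁) (D Dz d m : ℕ)
    (G' H : Polynomial (Polynomial F))
    (hG'monic : G'.Monic) (hG'deg : G'.natDegree = Dz)
    (hG'D : ∀ i, (G'.coeff i).natDegree ≤ D)
    (hH0 : H ≠ 0) (hHdeg : H.natDegree = d) (hd : d < Dz)
    (hHD : ∀ i, (H.coeff i).natDegree ≤ D)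
    (hm : (d + Dz) * D < m)
    (hEG : (Polynomial.X : Polynomial F₁) ^ m ∣
      ((G'.map (Polynomial.mapRingHom ℓ)).eval φ₁))
    (hEH : (Polynomial.X : Polynomial F₁) ^ m ∣
      ((H.map (Polynomial.mapRingHom ℓ)).eval φ₁)) :
    ∃ A C : Polynomial (Polynomial F), C ≠ 0 ∧ C.natDegree < Dz ∧ A * G' + C * H = 0 := by
  set N := d + Dz with hN
  have hDz : 0 < Dz := lt_of_le_of_lt (Nat.zero_le d) hd
  have hNpos : 0 < N := by omega
  -- the ring hom E
  set E : Polynomial (Polynomial F) →+* Polynomial F₁ :=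
    (Polynomial.evalRingHom φ₁).comp (Polynomial.mapRingHom (Polynomial.mapRingHom ℓ)) with hE
  have hEdef : ∀ p : Polynomial (Polynomial F),
      E p = (p.map (Polynomial.mapRingHom ℓ)).eval φ₁ := fun p => rfl
  -- row polynomials
  set P : ℕ → Polynomial (Polynomial F) :=
    fun r => if r < d then G' * Polynomial.X ^ r else H * Polynomial.X ^ (r - d) with hP
  have hPdeg : ∀ r : Fin N, (P r).natDegree < N := by
    rintro ⟨r, hr⟩
    simp only [hP]
    split_ifs with h
    · have h1 := Polynomial.natDegree_mul_le (p := G') (q := (Polynomial.X : Polynomial (Polynomial F)) ^ r)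
      rw [Polynomial.natDegree_X_pow, hG'deg] at h1
      omega
    · have h1 := Polynomial.natDegree_mul_le (p := H) (q := (Polynomial.X : Polynomial (Polynomial F)) ^ (r - d))
      rw [Polynomial.natDegree_X_pow, hHdeg] at h1
      omega
  have hPE : ∀ r : ℕ, (Polynomial.X : Polynomial F₁) ^ m ∣ E (P r) := by
    intro r
    simp only [hP]
    split_ifs with h
    · rw [map_mul]; exact Dvd.dvd.mul_right (by rw [hEdef]; exact hEG) _
    · rw [map_mul]; exact Dvd.dvd.mul_right (by rw [hEdef]; exact hEH) _
  -- the Sylvester-type matrix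
  set M : Matrix (Fin N) (Fin N) (Polynomial F) := fun r k => (P r).coeff k with hM
  have hMD : ∀ r k, (M r k).natDegree ≤ D := by
    intro r k
    simp only [hM, hP]
    split_ifs with h
    · rw [Polynomial.coeff_mul_X_pow']
      split_ifs
      · exact hG'D _
      · simp
    · rw [Polynomial.coeff_mul_X_pow']
      split_ifs
      · exact hHD _
      · simp
  -- combination identity
  have hcomb : ∀ a : Fin N → Polynomial F,
      (∑ r : Fin N, Polynomial.C (a r) * P r)
        = ∑ k : Fin N, Polynomial.C (∑ r : Fin N, a r * M r k) * Polynomial.X ^ (k : ℕ) := by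
    intro a
    have hrow : ∀ r : Fin N, (P r : Polynomial (Polynomial F))
        = ∑ k : Fin N, Polynomial.C (M r k) * Polynomial.X ^ (k : ℕ) := by
      intro r
      rw [Polynomial.as_sum_range' (P (r : ℕ)) N (hPdeg r), Finset.sum_range]
      simp [Polynomial.C_mul_X_pow_eq_monomial, hM]
    calc (∑ r : Fin N, Polynomial.C (a r) * P r)
        = ∑ r : Fin N, ∑ k : Fin N,
            Polynomial.C (a r * M r k) * Polynomial.X ^ (k : ℕ) := by
          refine Finset.sum_congr rfl fun r _ => ?_
          rw [hrow r, Finset.mul_sum]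
          refine Finset.sum_congr rfl fun k _ => ?_
          rw [map_mul]; ring
      _ = ∑ k : Fin N, Polynomial.C (∑ r : Fin N, a r * M r k) * Polynomial.X ^ (k : ℕ) := by
          rw [Finset.sum_comm]
          refine Finset.sum_congr rfl fun k _ => ?_
          rw [map_sum, Finset.sum_mul]
  by_cases hdet : M.det = 0
  · -- dependent rows: extract the combination
    obtain ⟨c, hc0, hcM⟩ := (Matrix.exists_vecMul_eq_zero_iff).2 hdet
    have hzero : (∑ r : Fin N, Polynomial.C (c r) * P r) = 0 := by
      rw [hcomb c]
      refine Finset.sum_eq_zero fun k _ => ?_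
      have : ∑ r : Fin N, c r * M r k = 0 := congrFun hcM k
      rw [this, map_zero, zero_mul]
    set c' : ℕ → Polynomial F := fun k => if h : k < N then c ⟨k, h⟩ else 0 with hc'
    set A : Polynomial (Polynomial F) :=
      ∑ i ∈ Finset.range d, Polynomial.C (c' i) * Polynomial.X ^ i with hA
    set CC : Polynomial (Polynomial F) :=
      ∑ j ∈ Finset.range Dz, Polynomial.C (c' (d + j)) * Polynomial.X ^ j with hCC
    have hsplit : A * G' + CC * H = 0 := by
      rw [← hzero]
      rw [hA, hCC, Finset.sum_mul, Finset.sum_mul]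
      have : (∑ r : Fin N, Polynomial.C (c r) * P r)
          = ∑ r ∈ Finset.range N, Polynomial.C (c' r) * P r := by
        rw [Finset.sum_range fun r => Polynomial.C (c' r) * P r]
        refine Finset.sum_congr rfl fun r _ => ?_
        simp only [hc', dif_pos r.isLt]
      rw [this, hN, Finset.sum_range_add]
      refine congrArg₂ (· + ·) ?_ ?_
      · refine Finset.sum_congr rfl fun i hi => ?_
        have : P i = G' * Polynomial.X ^ i := if_pos (Finset.mem_range.1 hi)
        rw [this]; ring
      · refine Finset.sum_congr rfl fun j _ => ?_
        have : P (d + j) = H * Polynomial.X ^ (d + j - d) := if_neg (by omega)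
        rw [this, Nat.add_sub_cancel_left]; ring
    have hCCdeg : CC.natDegree < Dz := by
      have : CC.natDegree ≤ Dz - 1 := by
        rw [hCC]
        refine Polynomial.natDegree_sum_le_of_forall_le _ _ fun j hj => ?_
        refine le_trans ?_ (Nat.le_sub_one_of_lt (Finset.mem_range.1 hj))
        rw [Polynomial.C_mul_X_pow_eq_monomial]
        exact Polynomial.natDegree_monomial_le _
      omega
    have hAco : ∀ k : ℕ, A.coeff k = if k < d then c' k else 0 := fun k => by
      rw [hA]; exact coeff_sum_monomial c' d k
    have hCCco : ∀ k : ℕ, CC.coeff k = if k < Dz then c' (d + k) else 0 := fun k => by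
      rw [hCC]; exact coeff_sum_monomial (fun j => c' (d + j)) Dz k
    by_cases hCCz : CC = 0
    · exfalso
      have hA0 : A = 0 := by
        have : A * G' = 0 := by
          have := hsplit; rw [hCCz, zero_mul, add_zero] at this; exact this
        rcases mul_eq_zero.1 this with h | h
        · exact h
        · exact absurd h hG'monic.ne_zero
      apply hc0
      funext r
      rcases Nat.lt_or_ge (r : ℕ) d with h | h
      · have := hAco r
        rw [hA0, Polynomial.coeff_zero, if_pos h] at this
        simpa [hc', r.isLt] using this.symm
      · have h2 : ((r : ℕ) - d) < Dz := by omega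
        have := hCCco ((r : ℕ) - d)
        rw [hCCz, Polynomial.coeff_zero, if_pos h2] at this
        have h3 : d + ((r : ℕ) - d) = (r : ℕ) := by omega
        rw [h3] at this
        simpa [hc', r.isLt] using this.symm
    · exact ⟨A, CC, hCCz, hCCdeg, hsplit⟩
  · -- det ≠ 0 : contradiction with degree bound
    exfalso
    set i0 : Fin N := ⟨0, hNpos⟩
    have key := hcomb (fun r => M.adjugate i0 r)
    have hadj : ∀ k : Fin N, (∑ r : Fin N, M.adjugate i0 r * M r k)
        = if i0 = k then M.det else 0 := by
      intro k
      have := congrFun (congrFun (Matrix.adjugate_mul M) i0) k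
      simpa [Matrix.mul_apply, Matrix.one_apply] using this
    have hkey2 : (∑ r : Fin N, Polynomial.C (M.adjugate i0 r) * P r)
        = Polynomial.C M.det := by
      rw [key]
      rw [Finset.sum_congr rfl fun k _ => by rw [hadj k]]
      have : ∀ k : Fin N, Polynomial.C (if i0 = k then M.det else 0) * Polynomial.X ^ (k : ℕ)
          = if i0 = k then Polynomial.C M.det * Polynomial.X ^ (k : ℕ) else 0 := by
        intro k; split_ifs <;> simp
      rw [Finset.sum_congr rfl fun k _ => this k, Finset.sum_ite_eq]
      simp [i0]
    -- X^m divides E of LHS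
    have hdvd : (Polynomial.X : Polynomial F₁) ^ m ∣ (M.det).map ℓ := by
      have h1 : E (Polynomial.C M.det) = (M.det).map ℓ := by
        rw [hEdef]; simp
      rw [← h1, ← hkey2, map_sum]
      exact Finset.dvd_sum fun r _ => by
        rw [map_mul]; exact Dvd.dvd.mul_left (hPE r) _
    have hne : (M.det).map ℓ ≠ 0 := by
      rw [Polynomial.map_ne_zero_iff ℓ.injective]
      exact hdet
    have hdeg : ((M.det).map ℓ).natDegree ≤ N * D := by
      refine le_trans Polynomial.natDegree_map_le ?_
      rw [Matrix.det_apply']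
      refine Polynomial.natDegree_sum_le_of_forall_le _ _ fun σ _ => ?_
      refine le_trans (Polynomial.natDegree_mul_le) ?_
      rw [Polynomial.natDegree_intCast, Nat.zero_add]
      refine le_trans (Polynomial.natDegree_prod_le _ _) ?_
      calc (∑ i : Fin N, (M (σ i) i).natDegree) ≤ ∑ _i : Fin N, D :=
            Finset.sum_le_sum fun i _ => hMD _ _
        _ = N * D := by simp [Finset.sum_const, Finset.card_univ]
    have := Polynomial.natDegree_le_of_dvd hdvd hne
    rw [Polynomial.natDegree_X_pow] at this
    omega

theorem stmt_11 {n : ℕ} (D Dz : ℕ)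
    (G : Polynomial (Polynomial (MvPolynomial (Fin n) ℚ)))
    (hGirr : Irreducible G) (hGmonic : G.Monic)
    (hGdegT : ∀ i : ℕ, (G.coeff i).natDegree ≤ D) (hGdegz : G.natDegree = Dz)
    (K : Type*) [Field K] [CharZero K]
    (φ : Polynomial (MvPolynomial (Fin n) K))
    -- `φ` is an approximate `z`-root of `G` of order `2·D·D_z + 1`:
    (hφ : ∀ j < 2 * D * Dz + 1,
      ((G.map (Polynomial.mapRingHom
          (MvPolynomial.map (algebraMap ℚ K)))).eval φ).coeff j = 0)
    (B : Polynomial (Polynomial (FractionRing (MvPolynomial (Fin n) ℚ))))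
    (hBmonic : B.Monic)
    (hBdegT : ∀ i : ℕ, (B.coeff i).natDegree ≤ D) (hBdegz : B.natDegree = Dz)
    -- `B(T, φ(T, x)) ≡ 0 mod T^{2·D·D_z + 1}`, with all coefficients viewed in `K(x)`:
    (hB : ∀ j < 2 * D * Dz + 1,
      ((B.map (Polynomial.mapRingHom (liftFrac n K))).eval
        (φ.map (algebraMap (MvPolynomial (Fin n) K)
          (FractionRing (MvPolynomial (Fin n) K))))).coeff j = 0) :
    B = G.map (Polynomial.mapRingHom
      (algebraMap (MvPolynomial (Fin n) ℚ) (FractionRing (MvPolynomial (Fin n) ℚ)))) := by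

  classical
  set m := 2 * D * Dz + 1 with hm
  set ℓ : (FractionRing (MvPolynomial (Fin n) ℚ)) →+* (FractionRing (MvPolynomial (Fin n) K)) := liftFrac n K with hℓ
  set G' : Polynomial (Polynomial (FractionRing (MvPolynomial (Fin n) ℚ))) :=
    G.map (Polynomial.mapRingHom (algebraMap (MvPolynomial (Fin n) ℚ) (FractionRing (MvPolynomial (Fin n) ℚ)))) with hG'
  set φ₁ : Polynomial (FractionRing (MvPolynomial (Fin n) K)) := φ.map (algebraMap (MvPolynomial (Fin n) K) (FractionRing (MvPolynomial (Fin n) K))) with hφ₁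
  by_contra hne
  -- basic setup
  have hinj : Function.Injective (algebraMap (MvPolynomial (Fin n) ℚ) (FractionRing (MvPolynomial (Fin n) ℚ))) := IsFractionRing.injective (MvPolynomial (Fin n) ℚ) (FractionRing (MvPolynomial (Fin n) ℚ))
  have hinj1 : Function.Injective (Polynomial.mapRingHom (algebraMap (MvPolynomial (Fin n) ℚ) (FractionRing (MvPolynomial (Fin n) ℚ)))) :=
    Polynomial.map_injective _ hinj
  have hinj2 : Function.Injective
      (Polynomial.mapRingHom (Polynomial.mapRingHom (algebraMap (MvPolynomial (Fin n) ℚ) (FractionRing (MvPolynomial (Fin n) ℚ))))) :=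
    Polynomial.map_injective _ hinj1
  have hG'monic : G'.Monic := hGmonic.map _
  have hG'deg : G'.natDegree = Dz := by
    rw [hG', Polynomial.natDegree_map_eq_of_injective hinj1, hGdegz]
  have hG'D : ∀ i, (G'.coeff i).natDegree ≤ D := by
    intro i
    simp only [hG', Polynomial.coeff_map, Polynomial.coe_mapRingHom]
    exact le_trans Polynomial.natDegree_map_le (hGdegT i)
  have hDz : 0 < Dz := by
    rcases Nat.eq_zero_or_pos Dz with h | h
    · exfalso
      have : G = 1 := by
        have := hGmonic.natDegree_eq_zero.1 (by rw [hGdegz, h])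
        exact this
      exact hGirr.not_isUnit (this ▸ isUnit_one)
    · exact h
  -- the difference H
  set H : Polynomial (Polynomial (FractionRing (MvPolynomial (Fin n) ℚ))) := B - G' with hH
  have hH0 : H ≠ 0 := sub_ne_zero.2 hne
  have hBne : B ≠ 0 := hBmonic.ne_zero
  set d := H.natDegree with hdd
  have hd : d < Dz := by
    have hdeg : H.degree < B.degree := by
      rw [hH]
      refine Polynomial.degree_sub_lt ?_ hBne ?_
      · rw [Polynomial.degree_eq_natDegree hBne, Polynomial.degree_eq_natDegree hG'monic.ne_zero,
          hBdegz, hG'deg]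
      · rw [hBmonic.leadingCoeff, hG'monic.leadingCoeff]
    have := (Polynomial.natDegree_lt_iff_degree_lt hH0).2
      (lt_of_lt_of_le hdeg (Polynomial.degree_le_natDegree.trans (by rw [hBdegz])))
    exact lt_of_lt_of_le this (le_of_eq rfl)
  have hHdeg : H.natDegree = d := rfl
  have hHD : ∀ i, (H.coeff i).natDegree ≤ D := by
    intro i
    rw [hH, Polynomial.coeff_sub]
    exact le_trans (Polynomial.natDegree_sub_le _ _) (max_le (hBdegT i) (hG'D i))
  have hmm : (d + Dz) * D < m := by
    have h1 : (d + Dz) * D ≤ (2 * Dz) * D := Nat.mul_le_mul_right D (by omega)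
    have h2 : (2 * Dz) * D = 2 * D * Dz := by ring
    omega
  -- divisibility hypotheses
  have hEB : (Polynomial.X : Polynomial (FractionRing (MvPolynomial (Fin n) K))) ^ m ∣
      ((B.map (Polynomial.mapRingHom ℓ)).eval φ₁) := Polynomial.X_pow_dvd_iff.2 hB
  have hEG : (Polynomial.X : Polynomial (FractionRing (MvPolynomial (Fin n) K))) ^ m ∣
      ((G'.map (Polynomial.mapRingHom ℓ)).eval φ₁) := by
    set GK : Polynomial (Polynomial (MvPolynomial (Fin n) K)) :=
      G.map (Polynomial.mapRingHom (MvPolynomial.map (algebraMap ℚ K))) with hGK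
    have step1 : (Polynomial.X : Polynomial (MvPolynomial (Fin n) K)) ^ m ∣ GK.eval φ :=
      Polynomial.X_pow_dvd_iff.2 hφ
    set g : MvPolynomial (Fin n) K →+* (FractionRing (MvPolynomial (Fin n) K)) := algebraMap (MvPolynomial (Fin n) K) (FractionRing (MvPolynomial (Fin n) K)) with hg
    have step2 : (Polynomial.X : Polynomial (FractionRing (MvPolynomial (Fin n) K))) ^ m ∣ (GK.eval φ).map g := by
      have := map_dvd (Polynomial.mapRingHom g) step1
      simpa [Polynomial.map_pow] using this
    have hcomp0 : ∀ y : (MvPolynomial (Fin n) ℚ), ℓ (algebraMap (MvPolynomial (Fin n) ℚ) (FractionRing (MvPolynomial (Fin n) ℚ)) y) = g (MvPolynomial.map (algebraMap ℚ K) y) := by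
      intro y
      simp only [hℓ]
      unfold liftFrac
      exact IsFractionRing.lift_algebraMap _ y
    have hcomp : ℓ.comp (algebraMap (MvPolynomial (Fin n) ℚ) (FractionRing (MvPolynomial (Fin n) ℚ))) = g.comp (MvPolynomial.map (algebraMap ℚ K)) :=
      RingHom.ext fun y => hcomp0 y
    have step3 : (GK.eval φ).map g = (G'.map (Polynomial.mapRingHom ℓ)).eval φ₁ := by
      rw [map_eval_comm g GK φ]
      congr 1
      rw [hGK, hG', Polynomial.map_map, Polynomial.map_map,
        Polynomial.mapRingHom_comp, Polynomial.mapRingHom_comp, hcomp]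
    rwa [step3] at step2
  have hEH : (Polynomial.X : Polynomial (FractionRing (MvPolynomial (Fin n) K))) ^ m ∣
      ((H.map (Polynomial.mapRingHom ℓ)).eval φ₁) := by
    rw [hH, Polynomial.map_sub, Polynomial.eval_sub]
    exact dvd_sub hEB hEG
  -- the Sylvester argument
  obtain ⟨A, CP, hCP0, hCPdeg, hrel⟩ :=
    sylvester_aux ℓ φ₁ D Dz d m G' H hG'monic hG'deg hG'D hH0 hHdeg hd hHD hmm hEG hEH
  -- clear denominators
  obtain ⟨b₁, hb₁, At, eA⟩ := denom2 (R := MvPolynomial (Fin n) ℚ) (F := (FractionRing (MvPolynomial (Fin n) ℚ))) A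
  obtain ⟨b₂, hb₂, Ct, eC⟩ := denom2 (R := MvPolynomial (Fin n) ℚ) (F := (FractionRing (MvPolynomial (Fin n) ℚ))) CP
  obtain ⟨b₃, hb₃, Ht, eH⟩ := denom2 (R := MvPolynomial (Fin n) ℚ) (F := (FractionRing (MvPolynomial (Fin n) ℚ))) H
  have hκ : ∀ b : (MvPolynomial (Fin n) ℚ), (Polynomial.C (Polynomial.C b) : Polynomial (Polynomial (MvPolynomial (Fin n) ℚ))).map
      (Polynomial.mapRingHom (algebraMap (MvPolynomial (Fin n) ℚ) (FractionRing (MvPolynomial (Fin n) ℚ))))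
        = Polynomial.C (Polynomial.C (algebraMap (MvPolynomial (Fin n) ℚ) (FractionRing (MvPolynomial (Fin n) ℚ)) b)) := by
    intro b; simp
  have E0 : Polynomial.C (Polynomial.C (b₂ * b₃)) * At * G
      + Polynomial.C (Polynomial.C b₁) * Ct * Ht = 0 := by
    apply hinj2
    simp only [map_add, map_mul, map_zero, Polynomial.coe_mapRingHom]
    simp only [hκ]
    rw [eA, eC, eH]
    calc Polynomial.C (Polynomial.C ((algebraMap (MvPolynomial (Fin n) ℚ) (FractionRing (MvPolynomial (Fin n) ℚ))) b₂))
          * Polynomial.C (Polynomial.C ((algebraMap (MvPolynomial (Fin n) ℚ) (FractionRing (MvPolynomial (Fin n) ℚ))) b₃))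
          * (Polynomial.C (Polynomial.C ((algebraMap (MvPolynomial (Fin n) ℚ) (FractionRing (MvPolynomial (Fin n) ℚ))) b₁)) * A) * G'
        + Polynomial.C (Polynomial.C ((algebraMap (MvPolynomial (Fin n) ℚ) (FractionRing (MvPolynomial (Fin n) ℚ))) b₁))
          * (Polynomial.C (Polynomial.C ((algebraMap (MvPolynomial (Fin n) ℚ) (FractionRing (MvPolynomial (Fin n) ℚ))) b₂)) * CP)
          * (Polynomial.C (Polynomial.C ((algebraMap (MvPolynomial (Fin n) ℚ) (FractionRing (MvPolynomial (Fin n) ℚ))) b₃)) * H)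
        = Polynomial.C (Polynomial.C ((algebraMap (MvPolynomial (Fin n) ℚ) (FractionRing (MvPolynomial (Fin n) ℚ))) b₁))
          * Polynomial.C (Polynomial.C ((algebraMap (MvPolynomial (Fin n) ℚ) (FractionRing (MvPolynomial (Fin n) ℚ))) b₂))
          * Polynomial.C (Polynomial.C ((algebraMap (MvPolynomial (Fin n) ℚ) (FractionRing (MvPolynomial (Fin n) ℚ))) b₃)) * (A * G' + CP * H) := by ring
      _ = 0 := by rw [hrel, mul_zero]
  -- primality of G
  have hGprime : Prime G := by
    letI I1 : CommMonoidWithZero (Polynomial (Polynomial (MvPolynomial (Fin n) ℚ))) :=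
      inferInstance
    letI I2 : @UniqueFactorizationMonoid (Polynomial (Polynomial (MvPolynomial (Fin n) ℚ))) I1 :=
      inferInstance
    have := @UniqueFactorizationMonoid.irreducible_iff_prime
      (Polynomial (Polynomial (MvPolynomial (Fin n) ℚ))) I1 I2 G
    exact this.mp hGirr
  have hdvd : G ∣ Polynomial.C (Polynomial.C b₁) * Ct * Ht :=
    ⟨-(Polynomial.C (Polynomial.C (b₂ * b₃)) * At), by
      rw [← sub_eq_zero, ← E0]; ring⟩
  have hb₁C : (Polynomial.C (Polynomial.C b₁) : Polynomial (Polynomial (MvPolynomial (Fin n) ℚ))) ≠ 0 := by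
    simp only [ne_eq, Polynomial.C_eq_zero]
    exact hb₁
  rcases hGprime.2.2 _ _ hdvd with h | h
  · rcases hGprime.2.2 _ _ h with h2 | h2
    · have := Polynomial.natDegree_le_of_dvd h2 hb₁C
      rw [hGdegz, Polynomial.natDegree_C] at this
      omega
    · -- G ∣ Ct
      have hCt0 : Ct ≠ 0 := by
        intro hz
        apply hCP0
        have := eC
        rw [hz, Polynomial.map_zero] at this
        have hκ2 : (Polynomial.C (Polynomial.C (algebraMap (MvPolynomial (Fin n) ℚ) (FractionRing (MvPolynomial (Fin n) ℚ)) b₂))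
            : Polynomial (Polynomial (FractionRing (MvPolynomial (Fin n) ℚ)))) ≠ 0 := by
          simp only [ne_eq, Polynomial.C_eq_zero]
          exact fun hzz => hb₂ (hinj (hzz.trans (map_zero _).symm))
        exact (mul_eq_zero.1 this.symm).resolve_left hκ2
      have hCtdeg : Ct.natDegree < Dz := by
        have e1 : Ct.natDegree = (Ct.map (Polynomial.mapRingHom (algebraMap (MvPolynomial (Fin n) ℚ) (FractionRing (MvPolynomial (Fin n) ℚ))))).natDegree :=
          (Polynomial.natDegree_map_eq_of_injective hinj1 Ct).symm
        have hκ2 : (Polynomial.C (Polynomial.C (algebraMap (MvPolynomial (Fin n) ℚ) (FractionRing (MvPolynomial (Fin n) ℚ)) b₂))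
            : Polynomial (Polynomial (FractionRing (MvPolynomial (Fin n) ℚ)))) ≠ 0 := by
          simp only [ne_eq, Polynomial.C_eq_zero]
          exact fun hzz => hb₂ (hinj (hzz.trans (map_zero _).symm))
        rw [e1, eC, Polynomial.natDegree_mul hκ2 hCP0, Polynomial.natDegree_C, Nat.zero_add]
        exact hCPdeg
      have := Polynomial.natDegree_le_of_dvd h2 hCt0
      rw [hGdegz] at this
      omega
  · -- G ∣ Ht
    have hHt0 : Ht ≠ 0 := by
      intro hz
      apply hH0
      have := eH
      rw [hz, Polynomial.map_zero] at this
      have hκ2 : (Polynomial.C (Polynomial.C (algebraMap (MvPolynomial (Fin n) ℚ) (FractionRing (MvPolynomial (Fin n) ℚ)) b₃))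
          : Polynomial (Polynomial (FractionRing (MvPolynomial (Fin n) ℚ)))) ≠ 0 := by
        simp only [ne_eq, Polynomial.C_eq_zero]
        exact fun hzz => hb₃ (hinj (hzz.trans (map_zero _).symm))
      exact (mul_eq_zero.1 this.symm).resolve_left hκ2
    have hHtdeg : Ht.natDegree < Dz := by
      have e1 : Ht.natDegree = (Ht.map (Polynomial.mapRingHom (algebraMap (MvPolynomial (Fin n) ℚ) (FractionRing (MvPolynomial (Fin n) ℚ))))).natDegree :=
        (Polynomial.natDegree_map_eq_of_injective hinj1 Ht).symm
      have hκ2 : (Polynomial.C (Polynomial.C (algebraMap (MvPolynomial (Fin n) ℚ) (FractionRing (MvPolynomial (Fin n) ℚ)) b₃))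
          : Polynomial (Polynomial (FractionRing (MvPolynomial (Fin n) ℚ)))) ≠ 0 := by
        simp only [ne_eq, Polynomial.C_eq_zero]
        exact fun hzz => hb₃ (hinj (hzz.trans (map_zero _).symm))
      rw [e1, eH, Polynomial.natDegree_mul hκ2 hH0, Polynomial.natDegree_C, Nat.zero_add]
      omega
    have := Polynomial.natDegree_le_of_dvd h hHt0
    rw [hGdegz] at this
    omega
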